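/- Let A be a real symmetric n×n completely positive matrix with rank r ≥ 2. Then A admits a decomposition A = U Uᵀ with U ∈ ℝ^{n×k} entrywise nonnegative where k ≤ r(r+1)/2 − 1; that is, the cp-rank of A is at most r(r+1)/2 − 1. -/

import Mathlib

open Matrix

def SumDecomp (n : ℕ) (A : Matrix (Fin n) (Fin n) ℝ) (m : ℕ) : Prop :=
  ∃ c : Fin m → (Fin n → ℝ), (∀ i x, 0 ≤ c i x) ∧ A = ∑ i, vecMulVec (c i) (c i)

lemma sumDecomp_iff (n : ℕ) (A : Matrix (Fin n) (Fin n) ℝ) (m : ℕ) :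
    SumDecomp n A m ↔ ∃ U : Matrix (Fin n) (Fin m) ℝ, (∀ i j, 0 ≤ U i j) ∧ A = U * Uᵀ := by
  constructor
  · rintro ⟨c, hc, rfl⟩
    refine ⟨Matrix.of fun x i => c i x, fun i j => hc _ _, ?_⟩
    ext a b
    simp [Matrix.mul_apply, Matrix.sum_apply, vecMulVec_apply]
  · rintro ⟨U, hU, rfl⟩
    refine ⟨fun i x => U x i, fun i x => hU _ _, ?_⟩
    ext a b
    simp [Matrix.mul_apply, Matrix.sum_apply, vecMulVec_apply]

lemma drop_zero_col {n m : ℕ} {A : Matrix (Fin n) (Fin n) ℝ}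
    (c : Fin (m + 1) → (Fin n → ℝ)) (hc : ∀ i x, 0 ≤ c i x)
    (hA : A = ∑ i, vecMulVec (c i) (c i)) (j : Fin (m + 1)) (hj : c j = 0) :
    ∃ c' : Fin m → (Fin n → ℝ), (∀ i x, 0 ≤ c' i x) ∧ A = ∑ i, vecMulVec (c' i) (c' i) := by
  refine ⟨fun i => c (j.succAbove i), fun i x => hc _ _, ?_⟩
  rw [hA, Fin.sum_univ_succAbove _ j, hj]
  ext a b; simp [vecMulVec]

-- scaled version: coefficients
lemma vecMulVec_smul_smul {n : ℕ} (t : ℝ) (v : Fin n → ℝ) :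
    vecMulVec (t • v) (t • v) = (t * t) • vecMulVec v v := by
  ext a b
  simp [vecMulVec_apply]
  ring

lemma sqrt_smul_vecMulVec {n : ℕ} (t : ℝ) (ht : 0 ≤ t) (v : Fin n → ℝ) :
    vecMulVec (Real.sqrt t • v) (Real.sqrt t • v) = t • vecMulVec v v := by
  rw [vecMulVec_smul_smul, Real.mul_self_sqrt ht]

lemma weighted_to_plain {n m : ℕ} {A : Matrix (Fin n) (Fin n) ℝ}
    (c : Fin m → (Fin n → ℝ)) (hc : ∀ i x, 0 ≤ c i x)
    (w : Fin m → ℝ) (hw : ∀ i, 0 ≤ w i)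
    (hA : A = ∑ i, w i • vecMulVec (c i) (c i)) :
    ∃ c' : Fin m → (Fin n → ℝ), (∀ i x, 0 ≤ c' i x) ∧
      (∀ i, w i = 0 → c' i = 0) ∧ A = ∑ i, vecMulVec (c' i) (c' i) := by
  refine ⟨fun i => Real.sqrt (w i) • c i, ?_, ?_, ?_⟩
  · intro i x
    exact mul_nonneg (Real.sqrt_nonneg _) (hc i x)
  · intro i hi; simp [hi]
  · rw [hA]
    exact Finset.sum_congr rfl fun i _ => (sqrt_smul_vecMulVec _ (hw i) _).symm

lemma reduce_dependent {n m : ℕ} {A : Matrix (Fin n) (Fin n) ℝ}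
    (c : Fin (m + 1) → (Fin n → ℝ)) (hc : ∀ i x, 0 ≤ c i x)
    (hA : A = ∑ i, vecMulVec (c i) (c i))
    (g : Fin (m + 1) → ℝ) (hg : g ≠ 0)
    (hrel : ∑ i, g i • vecMulVec (c i) (c i) = 0) :
    ∃ c' : Fin m → (Fin n → ℝ), (∀ i x, 0 ≤ c' i x) ∧ A = ∑ i, vecMulVec (c' i) (c' i) := by
  -- WLOG some coordinate of g is positive
  have key : ∀ g : Fin (m + 1) → ℝ, (∃ i, 0 < g i) →
      (∑ i, g i • vecMulVec (c i) (c i) = 0) →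
      ∃ c' : Fin m → (Fin n → ℝ), (∀ i x, 0 ≤ c' i x) ∧ A = ∑ i, vecMulVec (c' i) (c' i) := by
    intro g hpos hrel
    obtain ⟨i₁, -, hi₁⟩ := Finset.exists_max_image Finset.univ g ⟨0, Finset.mem_univ 0⟩
    obtain ⟨i₀, hi₀⟩ := hpos
    have hgi₁ : 0 < g i₁ := lt_of_lt_of_le hi₀ (hi₁ i₀ (Finset.mem_univ _))
    set t : ℝ := (g i₁)⁻¹ with ht
    have hA' : A = ∑ i, (1 - t * g i) • vecMulVec (c i) (c i) := by
      have : ∑ i, (1 - t * g i) • vecMulVec (c i) (c i)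
          = ∑ i, vecMulVec (c i) (c i) - t • ∑ i, g i • vecMulVec (c i) (c i) := by
        rw [Finset.smul_sum, ← Finset.sum_sub_distrib]
        refine Finset.sum_congr rfl fun i _ => ?_
        rw [sub_smul, one_smul, smul_smul]
      rw [this, hrel, smul_zero, sub_zero, hA]
    obtain ⟨c', hc', hzero, hA''⟩ := weighted_to_plain c hc _
      (fun i => by
        have := hi₁ i (Finset.mem_univ _)
        have h1 : t * g i ≤ 1 := by
          rw [ht]
          rw [inv_mul_le_iff₀ hgi₁]
          linarith
        linarith) hA'
    exact drop_zero_col c' hc' hA'' i₁ (hzero i₁ (by rw [ht]; field_simp; simp))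
  rcases Classical.em (∃ i, 0 < g i) with hpos | hneg
  · exact key g hpos hrel
  · have : ∃ i, 0 < (-g) i := by
      push_neg at hneg
      obtain ⟨i, hi⟩ := Function.ne_iff.mp hg
      exact ⟨i, by simpa using lt_of_le_of_ne (hneg i) hi⟩
    refine key (-g) this ?_
    have : ∑ i, (-g) i • vecMulVec (c i) (c i) = -∑ i, g i • vecMulVec (c i) (c i) := by
      rw [← Finset.sum_neg_distrib]
      exact Finset.sum_congr rfl fun i _ => by rw [Pi.neg_apply, neg_smul]
    rw [this, hrel, neg_zero]

lemma drop_zero_col' {n k : ℕ} {A : Matrix (Fin n) (Fin n) ℝ} (hk : 0 < k)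
    (c : Fin k → (Fin n → ℝ)) (hc : ∀ i x, 0 ≤ c i x)
    (hA : A = ∑ i, vecMulVec (c i) (c i)) (j : Fin k) (hj : c j = 0) :
    SumDecomp n A (k - 1) := by
  obtain ⟨m, rfl⟩ : ∃ m, k = m + 1 := ⟨k - 1, by omega⟩
  simpa [SumDecomp] using drop_zero_col c hc hA j hj

lemma reduce_dependent' {n k : ℕ} {A : Matrix (Fin n) (Fin n) ℝ} (hk : 0 < k)
    (c : Fin k → (Fin n → ℝ)) (hc : ∀ i x, 0 ≤ c i x)
    (hA : A = ∑ i, vecMulVec (c i) (c i))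
    (g : Fin k → ℝ) (hg : g ≠ 0)
    (hrel : ∑ i, g i • vecMulVec (c i) (c i) = 0) :
    SumDecomp n A (k - 1) := by
  obtain ⟨m, rfl⟩ : ∃ m, k = m + 1 := ⟨k - 1, by omega⟩
  simpa [SumDecomp] using reduce_dependent c hc hA g hg hrel


def symSub (m : ℕ) : Submodule ℝ (Matrix (Fin m) (Fin m) ℝ) where
  carrier := {X | X.IsSymm}
  add_mem' := fun {a b} ha hb => by
    simp only [Set.mem_setOf_eq, Matrix.IsSymm, transpose_add] at *; rw [ha, hb]
  zero_mem' := isSymm_zero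
  smul_mem' := fun c {X} h => by
    simp only [Set.mem_setOf_eq, Matrix.IsSymm, transpose_smul] at *; rw [h]

noncomputable def symSubEquiv (m : ℕ) :
    symSub m ≃ₗ[ℝ] ({ p : Fin m × Fin m // p.1 ≤ p.2 } → ℝ) where
  toFun X := fun p => (X : Matrix (Fin m) (Fin m) ℝ) p.1.1 p.1.2
  map_add' X Y := rfl
  map_smul' c X := rfl
  invFun φ := ⟨Matrix.of fun i j =>
      if h : i ≤ j then φ ⟨(i, j), h⟩ else φ ⟨(j, i), le_of_not_ge h⟩, by
    apply Matrix.IsSymm.ext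
    intro i j
    simp only [Matrix.of_apply]
    rcases le_total i j with h | h
    · rcases eq_or_lt_of_le h with rfl | hlt
      · rfl
      · rw [dif_pos h, dif_neg (not_le_of_gt hlt)]
    · rcases eq_or_lt_of_le h with rfl | hlt
      · rfl
      · rw [dif_neg (not_le_of_gt hlt), dif_pos h]⟩
  left_inv X := by
    ext i j
    simp only [Matrix.of_apply]
    split_ifs with h
    · rfl
    · exact X.2.apply i j
  right_inv φ := by
    ext ⟨⟨i, j⟩, h⟩
    simp [dif_pos h]

lemma finrank_symSub (m : ℕ) : Module.finrank ℝ (symSub m) = m * (m + 1) / 2 := by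
  rw [(symSubEquiv m).finrank_eq, Module.finrank_fintype_fun_eq_card]
  rw [Fintype.card_congr (Sym2.sortEquiv (α := Fin m)).symm, Sym2.card]
  simp [Nat.choose_two_right, Nat.mul_comm]

def symV (n : ℕ) (V : Submodule ℝ (Fin n → ℝ)) : Submodule ℝ (Matrix (Fin n) (Fin n) ℝ) where
  carrier := {X | X.IsSymm ∧ ∀ j, Xᵀ j ∈ V}
  add_mem' := fun {a b} ha hb => by
    refine ⟨?_, fun j => ?_⟩
    · have := ha.1; have := hb.1
      simp only [Matrix.IsSymm, transpose_add] at *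
      rw [ha.1, hb.1]
    · exact V.add_mem (ha.2 j) (hb.2 j)
  zero_mem' := ⟨isSymm_zero, fun j => by
    have h0 : ((0 : Matrix (Fin n) (Fin n) ℝ)ᵀ j) = 0 := by ext a; simp
    rw [h0]; exact V.zero_mem⟩
  smul_mem' := fun c {X} h => by
    refine ⟨?_, fun j => ?_⟩
    · have := h.1
      simp only [Matrix.IsSymm, transpose_smul] at *
      rw [this]
    · exact V.smul_mem c (h.2 j)

lemma col_mul_mem {n r m : ℕ} (P : Matrix (Fin n) (Fin r) ℝ) (M : Matrix (Fin r) (Fin m) ℝ)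
    (j : Fin m) : ((P * M)ᵀ j) = P *ᵥ (Mᵀ j) := by
  ext a
  simp [Matrix.mul_apply, Matrix.mulVec, dotProduct]

theorem finrank_symV {n : ℕ} (V : Submodule ℝ (Fin n → ℝ)) :
    Module.finrank ℝ (symV n V) = Module.finrank ℝ V * (Module.finrank ℝ V + 1) / 2 := by
  set r := Module.finrank ℝ V with hrdef
  let v : Module.Basis (Fin r) ℝ V := Module.finBasis ℝ V
  set P : Matrix (Fin n) (Fin r) ℝ := Matrix.of fun x j => (v j : Fin n → ℝ) x with hP
  have hPmul : ∀ y : Fin r → ℝ, P *ᵥ y = ∑ j, y j • ((v j : Fin n → ℝ)) := by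
    intro y; ext x
    simp [hP, Matrix.mulVec, dotProduct, Finset.sum_apply, mul_comm]
  have hPmem : ∀ y, P *ᵥ y ∈ V := fun y => by
    rw [hPmul]; exact Submodule.sum_mem _ fun j _ => V.smul_mem _ (v j).2
  have hPinj : LinearMap.ker P.mulVecLin = ⊥ := by
    rw [LinearMap.ker_eq_bot']
    intro y hy
    rw [Matrix.mulVecLin_apply, hPmul] at hy
    have hy' : ∑ j, y j • (v j) = (0 : V) := by
      apply Subtype.coe_injective
      push_cast
      simpa using hy
    funext j
    exact Fintype.linearIndependent_iff.mp v.linearIndependent y hy' j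
  obtain ⟨g, hg⟩ := LinearMap.exists_leftInverse_of_injective P.mulVecLin hPinj
  set Q : Matrix (Fin r) (Fin n) ℝ := LinearMap.toMatrix' g with hQ
  have hQapp : ∀ x, Q *ᵥ x = g x := by
    intro x
    rw [hQ, ← Matrix.toLin'_apply, Matrix.toLin'_toMatrix']
  have hQP : ∀ y, Q *ᵥ (P *ᵥ y) = y := by
    intro y
    rw [hQapp]
    have := congrArg (fun (f : (Fin r → ℝ) →ₗ[ℝ] (Fin r → ℝ)) => f y) hg
    simpa using this
  have hQPmat : Q * P = 1 := by
    ext i j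
    have h1 := congrFun (hQP (Pi.single j 1)) i
    rw [Matrix.mulVec_mulVec, Matrix.mulVec_single_one] at h1
    simp only [Matrix.col_apply] at h1
    rw [h1, Matrix.one_apply, Pi.single_apply]
  have hProj : ∀ x ∈ V, (P * Q) *ᵥ x = x := by
    intro x hx
    obtain ⟨y, rfl⟩ : ∃ y, P *ᵥ y = x := by
      refine ⟨fun j => v.repr ⟨x, hx⟩ j, ?_⟩
      rw [hPmul]
      have := v.sum_repr ⟨x, hx⟩
      calc ∑ j, v.repr ⟨x, hx⟩ j • (v j : Fin n → ℝ)
          = ((∑ j, v.repr ⟨x, hx⟩ j • v j : V) : Fin n → ℝ) := by push_cast; rfl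
        _ = x := by rw [this]
    rw [Matrix.mulVec_mulVec, Matrix.mul_assoc, ← Matrix.mulVec_mulVec, ← Matrix.mulVec_mulVec,
      hQP]
  have hPQX : ∀ X : Matrix (Fin n) (Fin n) ℝ, (∀ j, Xᵀ j ∈ V) → (P * Q) * X = X := by
    intro X hX
    ext i j
    have := congrFun (by rw [col_mul_mem]; exact hProj _ (hX j) :
      (((P * Q) * X)ᵀ j) = Xᵀ j) i
    simpa using this
  -- The linear map C ↦ P * C * Pᵀ
  let L : Matrix (Fin r) (Fin r) ℝ →ₗ[ℝ] Matrix (Fin n) (Fin n) ℝ :=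
    { toFun := fun C => P * C * Pᵀ
      map_add' := fun C D => by
        show P * (C + D) * Pᵀ = P * C * Pᵀ + P * D * Pᵀ
        rw [Matrix.mul_add, Matrix.add_mul]
      map_smul' := fun c C => by
        show P * (c • C) * Pᵀ = c • (P * C * Pᵀ)
        rw [Matrix.mul_smul, Matrix.smul_mul] }
  have hLmem : ∀ C ∈ symSub r, L C ∈ symV n V := by
    intro C hC
    have hCs : Cᵀ = C := hC
    constructor
    · show (P * C * Pᵀ)ᵀ = P * C * Pᵀ
      rw [Matrix.transpose_mul, Matrix.transpose_mul, Matrix.transpose_transpose, hCs,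
        Matrix.mul_assoc]
    · intro j
      show ((P * C * Pᵀ)ᵀ j) ∈ V
      rw [Matrix.mul_assoc, col_mul_mem]
      exact hPmem _
  let Φ : symSub r →ₗ[ℝ] symV n V :=
    LinearMap.codRestrict (symV n V) (L.comp (symSub r).subtype) (fun ⟨C, hC⟩ => hLmem C hC)
  have hΦbij : Function.Bijective Φ := by
    constructor
    · intro ⟨C, hC⟩ ⟨D, hD⟩ h
      have h' : P * C * Pᵀ = P * D * Pᵀ := congrArg (Subtype.val) h
      have key : ∀ M : Matrix (Fin r) (Fin r) ℝ, Q * (P * M * Pᵀ) * Qᵀ = M := by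
        intro M
        have ht : Pᵀ * Qᵀ = 1 := by
          rw [← Matrix.transpose_mul, hQPmat, Matrix.transpose_one]
        calc Q * (P * M * Pᵀ) * Qᵀ = (Q * P) * M * (Pᵀ * Qᵀ) := by
              simp only [Matrix.mul_assoc]
          _ = M := by rw [hQPmat, ht, Matrix.one_mul, Matrix.mul_one]
      apply Subtype.coe_injective
      show C = D
      rw [← key C, ← key D, h']
    · rintro ⟨X, hXs, hXc⟩
      have hXts : Xᵀ = X := hXs
      have hC : (Q * X * Qᵀ) ∈ symSub r := by
        show (Q * X * Qᵀ)ᵀ = Q * X * Qᵀ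
        rw [Matrix.transpose_mul, Matrix.transpose_mul, Matrix.transpose_transpose, hXts,
          Matrix.mul_assoc]
      refine ⟨⟨Q * X * Qᵀ, hC⟩, ?_⟩
      apply Subtype.coe_injective
      show P * (Q * X * Qᵀ) * Pᵀ = X
      have h1 : (P * Q) * X = X := hPQX X hXc
      have h2 : X * (Qᵀ * Pᵀ) = X := by
        have hXcols : ∀ j, (Xᵀ)ᵀ j ∈ V := by
          intro j
          rw [Matrix.transpose_transpose]
          have hXrow : X j = Xᵀ j := by
            funext i
            exact hXs.apply i j
          rw [hXrow]
          exact hXc j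
        have h3 : (P * Q) * Xᵀ = Xᵀ := hPQX Xᵀ hXcols
        have h2' : ((P * Q) * Xᵀ)ᵀ = X * (Qᵀ * Pᵀ) := by
          rw [Matrix.transpose_mul, Matrix.transpose_transpose, Matrix.transpose_mul]
        rw [← h2', h3, Matrix.transpose_transpose]
      calc P * (Q * X * Qᵀ) * Pᵀ = ((P * Q) * X) * (Qᵀ * Pᵀ) := by
            simp only [Matrix.mul_assoc]
        _ = X := by rw [h1, h2]
  rw [← finrank_symSub r]
  exact (LinearEquiv.ofBijective Φ hΦbij).finrank_eq.symm

lemma vecMulVec_transpose {n : ℕ} (a b : Fin n → ℝ) :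
    (vecMulVec a b)ᵀ = vecMulVec b a := by
  ext i j
  simp [vecMulVec_apply, mul_comm]

lemma vecMulVec_col {n : ℕ} (a b : Fin n → ℝ) (j : Fin n) :
    (vecMulVec a b)ᵀ j = b j • a := by
  ext i
  simp [vecMulVec_apply, mul_comm]

lemma vecMulVec_mem_symV {n : ℕ} (V : Submodule ℝ (Fin n → ℝ)) (a : Fin n → ℝ)
    (ha : a ∈ V) : vecMulVec a a ∈ symV n V := by
  refine ⟨vecMulVec_transpose a a, fun j => ?_⟩
  rw [vecMulVec_col]
  exact V.smul_mem _ ha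

/-- A completely positive matrix of rank `r ≥ 2` admits a nonnegative factorization
`A = U Uᵀ` with at most `r(r+1)/2 - 1` columns. -/
theorem cpRank_le_of_completelyPositive (n : ℕ) (A : Matrix (Fin n) (Fin n) ℝ)
    (hA : ∃ (k : ℕ) (U : Matrix (Fin n) (Fin k) ℝ),
      (∀ i j, 0 ≤ U i j) ∧ A = U * Uᵀ)
    (hr : 2 ≤ A.rank) :
    ∃ (k : ℕ) (U : Matrix (Fin n) (Fin k) ℝ),
      (∀ i j, 0 ≤ U i j) ∧ A = U * Uᵀ ∧ k ≤ A.rank * (A.rank + 1) / 2 - 1 := by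
  classical
  have hex : ∃ m, SumDecomp n A m := by
    obtain ⟨k, U, hU, hAU⟩ := hA
    exact ⟨k, (sumDecomp_iff n A k).mpr ⟨U, hU, hAU⟩⟩
  set k₀ := Nat.find hex with hk₀def
  have hk₀ : SumDecomp n A k₀ := Nat.find_spec hex
  have hmin : ∀ m, m < k₀ → ¬ SumDecomp n A m := fun m hm => Nat.find_min hex hm
  set r := A.rank with hrdef
  set N := r * (r + 1) / 2 with hNdef
  have hN3 : 3 ≤ N := by
    have : 2 * 3 ≤ r * (r + 1) := Nat.mul_le_mul hr (by omega)
    omega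
  suffices hle : k₀ ≤ N - 1 by
    obtain ⟨U, hU, hAU⟩ := (sumDecomp_iff n A k₀).mp hk₀
    exact ⟨k₀, U, hU, hAU, hle⟩
  by_contra hcon
  push_neg at hcon
  have hk₀N : N ≤ k₀ := by omega
  obtain ⟨c, hc, hAc⟩ := hk₀
  -- the span of the columns
  set V : Submodule ℝ (Fin n → ℝ) := Submodule.span ℝ (Set.range c) with hVdef
  have hfinV : Module.finrank ℝ V = r := by
    set U : Matrix (Fin n) (Fin k₀) ℝ := Matrix.of fun x i => c i x with hU
    have hAU : A = U * Uᵀ := by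
      rw [hAc]; ext a b
      simp [Matrix.mul_apply, Matrix.sum_apply, vecMulVec_apply, hU]
    have h1 : A.rank = U.rank := by rw [hAU]; exact Matrix.rank_self_mul_transpose U
    have h2 : LinearMap.range U.mulVecLin = V := by
      rw [Matrix.range_mulVecLin]; rfl
    have h3 : U.rank = Module.finrank ℝ V := by rw [Matrix.rank, h2]
    rw [← h3, ← h1]
  -- rank-one matrices
  set F : Fin k₀ → Matrix (Fin n) (Fin n) ℝ := fun i => vecMulVec (c i) (c i) with hF
  have hcV : ∀ i, c i ∈ V := fun i => Submodule.subset_span (Set.mem_range_self i)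
  have hFmem : ∀ i, F i ∈ symV n V := fun i => vecMulVec_mem_symV V (c i) (hcV i)
  set Fs : Fin k₀ → symV n V := fun i => ⟨F i, hFmem i⟩ with hFs
  have hdimSym : Module.finrank ℝ (symV n V) = N := by
    rw [finrank_symV, hfinV]
  have hAne : A ≠ 0 := by
    intro h0
    rw [hrdef, h0, Matrix.rank_zero] at hr
    omega
  have hk₀pos : 0 < k₀ := by omega
  obtain ⟨m, hm⟩ : ∃ m, k₀ = m + 1 := ⟨k₀ - 1, by omega⟩
  by_cases hind : LinearIndependent ℝ Fs
  · -- independent case: k₀ = N, basis, rotation argument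
    have hcard : k₀ ≤ N := by
      have := hind.fintype_card_le_finrank
      rwa [Fintype.card_fin, hdimSym] at this
    have hk₀eq : k₀ = N := le_antisymm hcard hk₀N
    have hNe : Nonempty (Fin k₀) := ⟨⟨0, hk₀pos⟩⟩
    let B : Module.Basis (Fin k₀) ℝ (symV n V) :=
      basisOfLinearIndependentOfCardEqFinrank hind (by rw [Fintype.card_fin, hdimSym, hk₀eq])
    have hBF : ∀ i, (B i : Matrix (Fin n) (Fin n) ℝ) = F i := by
      intro i
      rw [coe_basisOfLinearIndependentOfCardEqFinrank]
    -- find p with c p ≠ 0 and q with c q ∉ span {c p}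
    have hcnz : ∃ p, c p ≠ 0 := by
      by_contra hall
      push_neg at hall
      apply hAne
      rw [hAc]
      apply Finset.sum_eq_zero
      intro i _
      rw [hall i]
      ext a b; simp [vecMulVec_apply]
    obtain ⟨p, hp⟩ := hcnz
    have hq : ∃ q, c q ∉ Submodule.span ℝ {c p} := by
      by_contra hall
      push_neg at hall
      have hVle : V ≤ Submodule.span ℝ {c p} := by
        rw [hVdef, Submodule.span_le]
        rintro - ⟨i, rfl⟩
        exact hall i
      have := Submodule.finrank_mono hVle
      rw [hfinV, finrank_span_singleton hp] at this
      omega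
    obtain ⟨q, hq⟩ := hq
    have hpq : q ≠ p := by
      intro h
      apply hq
      rw [h]
      exact Submodule.mem_span_singleton_self _
    -- the symmetric rank-two matrix S
    set S : Matrix (Fin n) (Fin n) ℝ := vecMulVec (c p) (c q) + vecMulVec (c q) (c p)
      with hSdef
    have hSmem : S ∈ symV n V := by
      constructor
      · show Sᵀ = S
        rw [hSdef, Matrix.transpose_add, vecMulVec_transpose, vecMulVec_transpose, add_comm]
      · intro j
        have hcol : Sᵀ j = (c q j) • c p + (c p j) • c q := by
          funext i
          simp [hSdef, vecMulVec_apply, Matrix.transpose_apply, Matrix.add_apply, mul_comm]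
        rw [hcol]
        exact V.add_mem (V.smul_mem _ (hcV p)) (V.smul_mem _ (hcV q))
    set lam : Fin k₀ → ℝ := fun i => B.repr ⟨S, hSmem⟩ i with hlam
    have hSsum : S = ∑ i, lam i • F i := by
      have h1 := B.sum_repr ⟨S, hSmem⟩
      have h2 := congrArg (Subtype.val : symV n V → Matrix (Fin n) (Fin n) ℝ) h1
      calc S = ((∑ i, B.repr ⟨S, hSmem⟩ i • B i : symV n V) : Matrix (Fin n) (Fin n) ℝ) :=
            h2.symm
        _ = ∑ i, lam i • F i := by
            push_cast
            exact Finset.sum_congr rfl fun i _ => by rw [hlam, hBF]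
    -- the family x u and its coordinates γ u
    set x : ℝ → (Fin n → ℝ) := fun u => c p + u • c q with hx
    have hxnn : ∀ u, 0 ≤ u → ∀ a, 0 ≤ x u a := by
      intro u hu a
      have h1 := hc p a
      have h2 := hc q a
      simp only [hx, Pi.add_apply, Pi.smul_apply, smul_eq_mul]
      positivity
    have hxne : ∀ u, 0 ≤ u → x u ≠ 0 := by
      intro u hu hx0
      have h : c p + u • c q = 0 := hx0
      rcases eq_or_lt_of_le hu with rfl | hu'
      · apply hp
        simpa using h
      · apply hq
        rw [Submodule.mem_span_singleton]
        refine ⟨-u⁻¹, ?_⟩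
        have hcq : u • c q = -c p := eq_neg_of_add_eq_zero_right h
        have hq' : c q = u⁻¹ • (u • c q) := by
          rw [smul_smul, inv_mul_cancel₀ hu'.ne', one_smul]
        rw [hq', hcq, smul_neg, ← neg_smul]
    set γ : ℝ → Fin k₀ → ℝ := fun u i =>
      (if i = p then (1:ℝ) else 0) + (u * u) * (if i = q then 1 else 0) + u * lam i with hγ
    have hγcont : ∀ i, Continuous (fun u => γ u i) := by
      intro i
      simp only [hγ]
      fun_prop
    have hγp : ∀ u, γ u p = 1 + u * lam p := by
      intro u
      simp [hγ, Ne.symm hpq]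
    have hγq : ∀ u, γ u q = u * u + u * lam q := by
      intro u
      simp [hγ, hpq]
    have hXsum : ∀ u, vecMulVec (x u) (x u) = ∑ i, γ u i • F i := by
      intro u
      have hX2 : vecMulVec (x u) (x u) = F p + (u * u) • F q + u • S := by
        ext a b
        simp [hx, hSdef, hF, vecMulVec_apply, Matrix.add_apply, Matrix.smul_apply, smul_eq_mul]
        ring
      rw [hX2]
      have hsplit : ∀ i, γ u i • F i =
          (if i = p then F i else 0) + (if i = q then (u*u) • F i else 0) + u • (lam i • F i) := by
        intro i
        by_cases hip : i = p <;> by_cases hiq : i = q <;>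
          simp [hγ, hip, hiq, add_smul, mul_smul]
      rw [Finset.sum_congr rfl fun i _ => hsplit i]
      rw [Finset.sum_add_distrib, Finset.sum_add_distrib]
      rw [Finset.sum_ite_eq' Finset.univ p F]
      rw [Finset.sum_ite_eq' Finset.univ q (fun i => (u*u) • F i)]
      rw [← Finset.smul_sum, ← hSsum]
      simp
    have hAdecomp : ∀ s u, A = s • vecMulVec (x u) (x u) + ∑ i, (1 - s * γ u i) • F i := by
      intro s u
      rw [hXsum u, Finset.smul_sum, ← Finset.sum_add_distrib]
      rw [hAc]
      refine Finset.sum_congr rfl fun i _ => ?_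
      rw [smul_smul, ← add_smul]
      have h1 : s * γ u i + (1 - s * γ u i) = 1 := by ring
      rw [h1, one_smul]
    -- the set D and its supremum
    set D : Set ℝ := {u | 0 ≤ u ∧ ∀ i, γ u i ≤ γ u p} with hD
    have h0D : (0 : ℝ) ∈ D := by
      refine ⟨le_refl 0, fun i => ?_⟩
      simp only [hγ]
      split_ifs <;> norm_num
    have hDbdd : BddAbove D := by
      refine ⟨1 + |lam p| + |lam q|, fun u hu => ?_⟩
      by_contra hgt
      push_neg at hgt
      have hb0 : (0:ℝ) < 1 + |lam p| + |lam q| := by positivity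
      have hu0 : (0:ℝ) < u := lt_trans hb0 hgt
      have hkey : u * (1 + |lam p| + |lam q|) < u * u := mul_lt_mul_of_pos_left hgt hu0
      have h1 : u * lam p ≤ u * |lam p| := mul_le_mul_of_nonneg_left (le_abs_self _) hu0.le
      have h2 : u * (-|lam q|) ≤ u * lam q := mul_le_mul_of_nonneg_left (neg_abs_le _) hu0.le
      have hcontra := hu.2 q
      rw [hγq, hγp] at hcontra
      have hu1 : (1:ℝ) < u := lt_of_le_of_lt
        (by have := abs_nonneg (lam p); have := abs_nonneg (lam q); linarith) hgt
      rw [mul_add, mul_add, mul_one] at hkey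
      have h2' : -(u * |lam q|) ≤ u * lam q := by rw [← mul_neg]; exact h2
      linarith
    have hDclosed : IsClosed D := by
      have hDeq : D = {u : ℝ | 0 ≤ u} ∩ ⋂ i, {u : ℝ | γ u i ≤ γ u p} := by
        ext u
        simp [hD, Set.mem_iInter]
      rw [hDeq]
      exact (isClosed_le continuous_const continuous_id).inter
        (isClosed_iInter fun i => isClosed_le (hγcont i) (hγcont p))
    set ustar : ℝ := sSup D with hustar
    have hustarD : ustar ∈ D := hDclosed.csSup_mem ⟨0, h0D⟩ hDbdd
    have hustar0 : 0 ≤ ustar := hustarD.1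
    have hustarmax : ∀ i, γ ustar i ≤ γ ustar p := hustarD.2
    -- find a tie j ≠ p
    have htie : ∃ j, j ≠ p ∧ γ ustar j = γ ustar p := by
      by_contra hno
      push_neg at hno
      have hlt : ∀ j, j ≠ p → γ ustar j < γ ustar p :=
        fun j hj => lt_of_le_of_ne (hustarmax j) (hno j hj)
      have hev : ∀ᶠ u in nhds ustar, ∀ j ∈ Finset.univ.erase p, γ u j < γ u p := by
        rw [Filter.eventually_all_finset]
        intro j hj
        exact ((hγcont j).continuousAt).eventually_lt ((hγcont p).continuousAt)
          (hlt j (Finset.ne_of_mem_erase hj))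
      have hev' : ∀ᶠ u in nhdsWithin ustar (Set.Ioi ustar), u ∈ D := by
        filter_upwards [hev.filter_mono nhdsWithin_le_nhds, self_mem_nhdsWithin] with u hu1 hu2
        refine ⟨le_trans hustar0 (le_of_lt hu2), fun i => ?_⟩
        by_cases hip : i = p
        · rw [hip]
        · exact (hu1 i (Finset.mem_erase.mpr ⟨hip, Finset.mem_univ i⟩)).le
      obtain ⟨u, huD, huI⟩ := (hev'.and self_mem_nhdsWithin).exists
      exact absurd (le_csSup hDbdd huD) (not_le_of_gt huI)
    obtain ⟨j, hjp, hjeq⟩ := htie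
    -- positivity of the max coordinate
    have hpos : 0 < γ ustar p := by
      by_contra hle
      push_neg at hle
      have hall : ∀ i, γ ustar i ≤ 0 := fun i => le_trans (hustarmax i) hle
      apply hxne ustar hustar0
      funext a
      have hEq := congrArg (fun (M : Matrix (Fin n) (Fin n) ℝ) => M a a) (hXsum ustar)
      simp only [vecMulVec_apply] at hEq
      have hR : (∑ i, γ ustar i • F i) a a = ∑ i, γ ustar i * (c i a * c i a) := by
        rw [Matrix.sum_apply]
        exact Finset.sum_congr rfl fun i _ => by simp [hF, vecMulVec_apply]
      rw [hR] at hEq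
      have hRle : ∑ i, γ ustar i * (c i a * c i a) ≤ 0 :=
        Finset.sum_nonpos fun i _ =>
          mul_nonpos_of_nonpos_of_nonneg (hall i) (mul_self_nonneg _)
      have h0 : x ustar a * x ustar a = 0 :=
        le_antisymm (hEq ▸ hRle) (mul_self_nonneg _)
      exact mul_self_eq_zero.mp h0
    -- the new decomposition with a zero column
    set sc : ℝ := (γ ustar p)⁻¹ with hsc
    have hsc0 : 0 ≤ sc := inv_nonneg.mpr hpos.le
    have hscp : sc * γ ustar p = 1 := inv_mul_cancel₀ hpos.ne'
    have hν : ∀ i, 0 ≤ 1 - sc * γ ustar i := by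
      intro i
      have h1 : sc * γ ustar i ≤ sc * γ ustar p :=
        mul_le_mul_of_nonneg_left (hustarmax i) hsc0
      rw [hscp] at h1
      linarith
    set c' : Fin k₀ → (Fin n → ℝ) := fun i =>
      if i = p then Real.sqrt sc • x ustar else Real.sqrt (1 - sc * γ ustar i) • c i with hc'def
    have hc' : ∀ i a, 0 ≤ c' i a := by
      intro i a
      simp only [hc'def]
      split_ifs
      · exact mul_nonneg (Real.sqrt_nonneg _) (hxnn ustar hustar0 a)
      · exact mul_nonneg (Real.sqrt_nonneg _) (hc i a)
    have hνp : (1 : ℝ) - sc * γ ustar p = 0 := by rw [hscp, sub_self]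
    have hc'j : c' j = 0 := by
      simp only [hc'def, if_neg hjp]
      rw [hjeq, hνp, Real.sqrt_zero, zero_smul]
    have hA' : A = ∑ i, vecMulVec (c' i) (c' i) := by
      rw [hAdecomp sc ustar]
      have hterm : ∀ i, vecMulVec (c' i) (c' i) =
          if i = p then sc • vecMulVec (x ustar) (x ustar) else (1 - sc * γ ustar i) • F i := by
        intro i
        simp only [hc'def]
        split_ifs
        · exact sqrt_smul_vecMulVec sc hsc0 _
        · exact sqrt_smul_vecMulVec _ (hν i) _
      rw [Finset.sum_congr rfl fun i _ => hterm i]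
      rw [← Finset.add_sum_erase _ (fun i =>
        if i = p then sc • vecMulVec (x ustar) (x ustar) else (1 - sc * γ ustar i) • F i)
        (Finset.mem_univ p)]
      rw [if_pos rfl]
      rw [← Finset.add_sum_erase _ (fun i => (1 - sc * γ ustar i) • F i) (Finset.mem_univ p)]
      rw [hνp, zero_smul, zero_add]
      congr 1
      exact Finset.sum_congr rfl fun i hi => (if_neg (Finset.ne_of_mem_erase hi)).symm
    exact hmin (k₀ - 1) (by omega) (drop_zero_col' hk₀pos c' hc' hA' j hc'j)
  · -- dependent case: reduce
    obtain ⟨g, hgsum, i₀, hgi₀⟩ := Fintype.not_linearIndependent_iff.mp hind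
    have hgsum' : ∑ i, g i • F i = 0 := by
      have := congrArg (Subtype.val : symV n V → Matrix (Fin n) (Fin n) ℝ) hgsum
      simpa using this
    have hgne : g ≠ 0 := by
      intro h; rw [h] at hgi₀; exact hgi₀ rfl
    exact hmin (k₀ - 1) (by omega) (reduce_dependent' hk₀pos c hc hAc g hgne hgsum')
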